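/- Let Γ be a simple closed curve on S^2 that is spherically convex (bounds a convex region) and contains a pair of antipodal points. Then Γ bounds a lune; in particular Γ contains two geodesic (great circle) subarcs. -/

import Mathlib

/-- Dot product on `ℝ³`. -/
def dot3 (u v : Fin 3 → ℝ) : ℝ := u 0 * v 0 + u 1 * v 1 + u 2 * v 2

/-- The unit sphere `S²` in `ℝ³`. -/
def unitSphere2 : Set (Fin 3 → ℝ) := {x | dot3 x x = 1}

/-- A subset `X ⊆ S²` is spherically convex if every two points of `X` can be joined by a
geodesic arc (arc of a great circle) of length at most `π` contained in `X`. -/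
def SphConvex (X : Set (Fin 3 → ℝ)) : Prop :=
  ∀ x ∈ X, ∀ y ∈ X, ∃ u : Fin 3 → ℝ, ∃ L : ℝ,
    dot3 u u = 1 ∧ dot3 x u = 0 ∧ 0 ≤ L ∧ L ≤ Real.pi ∧
    y = Real.cos L • x + Real.sin L • u ∧
    ∀ α ∈ Set.Icc (0 : ℝ) L, Real.cos α • x + Real.sin α • u ∈ X

/-- The half great circle with endpoints `p` and `-p` passing through the direction `q`. -/
def halfGreatCircle (p q : Fin 3 → ℝ) : Set (Fin 3 → ℝ) :=
  {x | ∃ α ∈ Set.Icc (0 : ℝ) Real.pi, x = Real.cos α • p + Real.sin α • q}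

namespace Stmt10Aux

lemma dot3_comm (u v : Fin 3 → ℝ) : dot3 u v = dot3 v u := by simp [dot3]; ring

lemma dot3_comb (a b c d : ℝ) (x y z w : Fin 3 → ℝ) :
    dot3 (a • x + b • y) (c • z + d • w) =
      a*c*dot3 x z + a*d*dot3 x w + b*c*dot3 y z + b*d*dot3 y w := by
  simp [dot3]; ring

lemma dot3_comb_left (a b : ℝ) (x y z : Fin 3 → ℝ) :
    dot3 (a • x + b • y) z = a * dot3 x z + b * dot3 y z := by
  simp [dot3]; ring

lemma eq_zero_of_dot3 (z : Fin 3 → ℝ) (h : dot3 z z = 0) : z = 0 := by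
  simp only [dot3] at h
  funext i
  fin_cases i <;> simp <;> nlinarith [sq_nonneg (z 0), sq_nonneg (z 1), sq_nonneg (z 2)]

def cross3 (u v : Fin 3 → ℝ) : Fin 3 → ℝ :=
  ![u 1 * v 2 - u 2 * v 1, u 2 * v 0 - u 0 * v 2, u 0 * v 1 - u 1 * v 0]

lemma cross3_lagrange (u v : Fin 3 → ℝ) :
    dot3 (cross3 u v) (cross3 u v) = dot3 u u * dot3 v v - dot3 u v * dot3 u v := by
  simp [dot3, cross3]; ring

lemma cross3_orth_left (u v : Fin 3 → ℝ) : dot3 (cross3 u v) u = 0 := by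
  simp [dot3, cross3]; ring

lemma cross3_orth_right (u v : Fin 3 → ℝ) : dot3 (cross3 u v) v = 0 := by
  simp [dot3, cross3]; ring

lemma double_cross (u v q : Fin 3 → ℝ) (i : Fin 3) :
    (cross3 (cross3 u v) q) i = dot3 u q * v i - dot3 v q * u i := by
  fin_cases i <;> simp [dot3, cross3] <;> ring

lemma span_two (p u₀ q : Fin 3 → ℝ) (hp : dot3 p p = 1) (hu : dot3 u₀ u₀ = 1)
    (hpu : dot3 p u₀ = 0) (h1 : dot3 q p = 0) (h2 : dot3 q u₀ = 0) :
    q = dot3 q (cross3 p u₀) • cross3 p u₀ := by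
  set c := cross3 p u₀ with hc
  have hcc : dot3 c c = 1 := by rw [hc, cross3_lagrange, hp, hu, hpu]; ring
  have hcq : cross3 c q = 0 := by
    funext i
    rw [hc, double_cross]
    have h1' : dot3 p q = 0 := by rw [dot3_comm, h1]
    have h2' : dot3 u₀ q = 0 := by rw [dot3_comm, h2]
    rw [h1', h2']; simp
  have hlag : dot3 (cross3 c q) (cross3 c q) = dot3 c c * dot3 q q - dot3 c q * dot3 c q :=
    cross3_lagrange c q
  rw [hcq] at hlag
  have h0 : dot3 (0 : Fin 3 → ℝ) 0 = 0 := by simp [dot3]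
  rw [h0, hcc] at hlag
  have key : dot3 (q - dot3 q c • c) (q - dot3 q c • c) = 0 := by
    have e1 : dot3 (q - dot3 q c • c) (q - dot3 q c • c)
        = dot3 q q - 2 * dot3 q c * dot3 c q + dot3 q c * dot3 q c * dot3 c c := by
      simp [dot3]; ring
    have e2 : dot3 q c = dot3 c q := dot3_comm _ _
    rw [e1, e2, hcc]; nlinarith [hlag]
  have h3 : q - dot3 q c • c = 0 := eq_zero_of_dot3 _ key
  linear_combination (norm := abel) h3

lemma circle_surj (a b : ℝ) (h : a^2 + b^2 = 1) : ∃ θ, Real.cos θ = a ∧ Real.sin θ = b := by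
  have ha1 : -1 ≤ a := by nlinarith [sq_nonneg b]
  have ha2 : a ≤ 1 := by nlinarith [sq_nonneg b]
  rcases le_or_gt 0 b with hb | hb
  · refine ⟨Real.arccos a, Real.cos_arccos ha1 ha2, ?_⟩
    rw [Real.sin_arccos, show 1 - a^2 = b^2 by linarith]
    exact Real.sqrt_sq hb
  · refine ⟨-Real.arccos a, by rw [Real.cos_neg]; exact Real.cos_arccos ha1 ha2, ?_⟩
    rw [Real.sin_neg, Real.sin_arccos, show 1 - a^2 = b^2 by linarith,
      show b^2 = (-b)^2 by ring, Real.sqrt_sq (by linarith)]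
    ring

lemma one_sub_cos_le (δ : ℝ) (h0 : 0 ≤ δ) : 1 - Real.cos δ ≤ δ^2 / 2 := by
  have h1 : Real.cos δ = 1 - 2 * Real.sin (δ/2) ^ 2 := by
    have h3 := Real.cos_two_mul' (δ/2)
    have h2 := Real.sin_sq_add_cos_sq (δ/2)
    rw [show 2 * (δ/2) = δ by ring] at h3
    nlinarith
  have h2 : Real.sin (δ/2) ≤ δ/2 := Real.sin_le (by linarith)
  have h3 : -(δ/2) ≤ Real.sin (δ/2) := by
    have := Real.neg_one_le_sin (δ/2)
    rcases le_or_gt 1 (δ/2) with h | h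
    · linarith
    · nlinarith [Real.sin_le (by linarith : (0:ℝ) ≤ δ/2), Real.neg_one_le_sin (δ/2),
        Real.sin_nonneg_of_nonneg_of_le_pi (by linarith : (0:ℝ) ≤ δ/2)
          (by nlinarith [Real.pi_gt_three])]
  nlinarith

lemma small_angle (r : ℝ) (hr : 0 < r) :
    ∃ δ : ℝ, 0 < δ ∧ δ < Real.pi ∧ 2 - 2 * Real.cos δ < r := by
  refine ⟨min (Real.pi/2) (Real.sqrt r / 2), ?_, ?_, ?_⟩
  · exact lt_min (by positivity) (by positivity)
  · exact lt_of_le_of_lt (min_le_left _ _) (by linarith [Real.pi_pos])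
  · set δ := min (Real.pi/2) (Real.sqrt r / 2) with hδ
    have hδ0 : 0 ≤ δ := le_min (by positivity) (by positivity)
    have h4 := one_sub_cos_le δ hδ0
    have h5 : δ ≤ Real.sqrt r / 2 := min_le_right _ _
    have h6 : δ^2 ≤ r / 4 := by
      have := Real.sq_sqrt hr.le
      nlinarith [Real.sqrt_nonneg r]
    nlinarith

lemma cauchy (y p : Fin 3 → ℝ) (hy : dot3 y y = 1) (hp : dot3 p p = 1) :
    (dot3 y p)^2 ≤ 1 := by
  simp only [dot3] at *
  nlinarith [sq_nonneg (y 0 * p 1 - y 1 * p 0), sq_nonneg (y 0 * p 2 - y 2 * p 0),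
    sq_nonneg (y 1 * p 2 - y 2 * p 1)]

lemma eq_of_dot_one (y p : Fin 3 → ℝ) (hy : dot3 y y = 1) (hp : dot3 p p = 1)
    (h : dot3 y p = 1) : y = p := by
  have e : dot3 (y - p) (y - p) = dot3 y y - 2 * dot3 y p + dot3 p p := by
    simp [dot3]; ring
  rw [hy, hp, h] at e
  have := eq_zero_of_dot3 _ (by rw [e]; ring)
  exact sub_eq_zero.mp this

lemma eq_of_dot_neg_one (y p : Fin 3 → ℝ) (hy : dot3 y y = 1) (hp : dot3 p p = 1)
    (h : dot3 y p = -1) : y = -p := by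
  have e : dot3 (y + p) (y + p) = dot3 y y + 2 * dot3 y p + dot3 p p := by
    simp [dot3]; ring
  rw [hy, hp, h] at e
  have h2 := eq_zero_of_dot3 _ (by rw [e]; ring)
  have : y = -p + (y + p) := by abel
  rw [this, h2, add_zero]
lemma structure_arc (A : Set ℝ) (hcl : IsClosed A)
    (hper : ∀ θ ∈ A, ∀ k : ℤ, θ + 2*Real.pi*k ∈ A)
    (hconv : ∀ s ∈ A, ∀ t ∈ A, s ≤ t → t - s < Real.pi → Set.Icc s t ⊆ A)
    (ψ : ℝ) (hψ : ψ ∉ A)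
    (θ' : ℝ) (δ : ℝ) (hδ : 0 < δ) (hint : Set.Icc (θ'-δ) (θ'+δ) ⊆ A) :
    ∃ θ₁ θ₂ : ℝ, θ₁ ∈ A ∧ θ₂ ∈ A ∧ 0 < θ₂ - θ₁ ∧ θ₂ - θ₁ ≤ Real.pi ∧
      Set.Icc θ₁ θ₂ ⊆ A ∧ (∀ θ ∈ A, ∃ k : ℤ, θ - 2*Real.pi*k ∈ Set.Icc θ₁ θ₂) := by
  have hπ := Real.pi_pos
  have h2π : (0:ℝ) < 2*Real.pi := by linarith
  have hθ'A : θ' ∈ A := hint ⟨by linarith, by linarith⟩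
  -- normalize θ' into (ψ, ψ + 2π)
  set θ'' := toIcoMod h2π ψ θ' with hθ''
  have hmem : θ'' ∈ Set.Ico ψ (ψ + 2*Real.pi) := toIcoMod_mem_Ico h2π ψ θ'
  have hsub : ∃ k : ℤ, θ'' = θ' + 2*Real.pi*k := by
    refine ⟨-(toIcoDiv h2π ψ θ'), ?_⟩
    rw [hθ'', toIcoMod]
    push_cast
    ring_nf
  obtain ⟨k₀, hk₀⟩ := hsub
  have hθ''A : θ'' ∈ A := by rw [hk₀]; exact hper θ' hθ'A k₀
  have hθ''ne : θ'' ≠ ψ := fun h => hψ (h ▸ hθ''A)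
  have hθ''lo : ψ < θ'' := lt_of_le_of_ne hmem.1 (Ne.symm hθ''ne)
  have hθ''hi : θ'' < ψ + 2*Real.pi := hmem.2
  -- shifted interior interval
  have hint'' : ∀ t, t ∈ Set.Icc (θ''-δ) (θ''+δ) → t ∈ A := by
    intro t ht
    have : t - 2*Real.pi*k₀ ∈ Set.Icc (θ'-δ) (θ'+δ) := by
      constructor <;> [skip; skip] <;> (have h1 := ht.1; have h2 := ht.2; rw [hk₀] at h1 h2; linarith)
    have := hint this
    have := hper _ this k₀
    simpa using this
  -- shrink δ
  set δ' := min δ (min ((θ''-ψ)/2) ((ψ+2*Real.pi-θ'')/2)) with hδ'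
  have hδ'0 : 0 < δ' := lt_min hδ (lt_min (by linarith) (by linarith))
  have hδ'δ : δ' ≤ δ := min_le_left _ _
  have hδ'1 : δ' ≤ (θ''-ψ)/2 := le_trans (min_le_right _ _) (min_le_left _ _)
  have hδ'2 : δ' ≤ (ψ+2*Real.pi-θ'')/2 := le_trans (min_le_right _ _) (min_le_right _ _)
  set A' := A ∩ Set.Icc ψ (ψ+2*Real.pi) with hA'
  have hA'cl : IsClosed A' := hcl.inter isClosed_Icc
  have hA'ne : A'.Nonempty := ⟨θ'', hθ''A, by constructor <;> linarith⟩
  have hA'bdd : BddBelow A' := ⟨ψ, fun x hx => hx.2.1⟩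
  have hA'bdd2 : BddAbove A' := ⟨ψ+2*Real.pi, fun x hx => hx.2.2⟩
  set m := sInf A' with hm
  set M := sSup A' with hM
  have hmA' : m ∈ A' := hA'cl.csInf_mem hA'ne hA'bdd
  have hMA' : M ∈ A' := hA'cl.csSup_mem hA'ne hA'bdd2
  have hmA : m ∈ A := hmA'.1
  have hMA : M ∈ A := hMA'.1
  have hml : m ≤ θ'' - δ' := csInf_le hA'bdd ⟨hint'' _ ⟨by linarith, by linarith⟩,
    by constructor <;> linarith⟩
  have hMg : θ'' + δ' ≤ M := le_csSup hA'bdd2 ⟨hint'' _ ⟨by linarith, by linarith⟩,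
    by constructor <;> linarith⟩
  have hmθ : m ≤ θ'' := csInf_le hA'bdd ⟨hθ''A, by constructor <;> linarith⟩
  have hθM : θ'' ≤ M := le_csSup hA'bdd2 ⟨hθ''A, by constructor <;> linarith⟩
  have hψm : ψ < m := lt_of_le_of_ne hmA'.2.1 (fun h => hψ (h ▸ hmA))
  have hMψ : M < ψ + 2*Real.pi := by
    rcases lt_or_eq_of_le hMA'.2.2 with h | h
    · exact h
    · exfalso; apply hψ
      have := hper M hMA (-1)
      rw [h] at this; push_cast at this
      simpa [show ψ + 2*Real.pi + 2*Real.pi*(-1) = ψ by ring] using this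
  have hMm : M - m ≤ Real.pi := by
    by_contra h
    push_neg at h
    have hm2 : m + 2*Real.pi ∈ A := by
      have := hper m hmA 1; push_cast at this; convert this using 2; ring
    have hsub2 : Set.Icc M (m + 2*Real.pi) ⊆ A :=
      hconv M hMA (m + 2*Real.pi) hm2 (by linarith) (by linarith)
    exact hψ (by
      have : ψ + 2*Real.pi ∈ A := hsub2 ⟨by linarith, by linarith⟩
      have := hper _ this (-1); push_cast at this
      simpa [show ψ + 2*Real.pi + 2*Real.pi*(-1) = ψ by ring] using this)
  have hIcc : Set.Icc m M ⊆ A := by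
    rcases lt_or_eq_of_le hMm with h | h
    · exact hconv m hmA M hMA (by linarith) h
    · -- M - m = π exactly; use intermediate point
      have h2δ' : 2*δ' ≤ Real.pi := by linarith
      set t := min (max θ'' (m + δ')) (M - δ') with ht
      have htub : m + δ' ≤ t := by
        apply le_min (le_max_right _ _); linarith
      have htlb : t ≤ M - δ' := min_le_right _ _
      have htA : t ∈ A := by
        apply hint''
        rcases le_total θ'' (m + δ') with hc | hc
        · have he : t = m + δ' := by
            rw [ht, max_eq_right hc]; exact min_eq_left (by linarith)
          rw [he]; constructor <;> linarith
        · rcases le_total θ'' (M - δ') with hc2 | hc2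
          · have he : t = θ'' := by
              rw [ht, max_eq_left hc, min_eq_left hc2]
            rw [he]; constructor <;> linarith
          · have he : t = M - δ' := by
              rw [ht, max_eq_left hc]; exact min_eq_right hc2
            rw [he]; constructor <;> linarith
      intro x hx
      rcases le_total x t with hc | hc
      · exact hconv m hmA t htA (by linarith [hx.1]) (by linarith) ⟨hx.1, hc⟩
      · exact hconv t htA M hMA (by linarith [hx.2]) (by linarith) ⟨hc, hx.2⟩
  refine ⟨m, M, hmA, hMA, by linarith, hMm, hIcc, ?_⟩
  intro θ hθ
  set th := toIcoMod h2π ψ θ with hth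
  have hmem2 : th ∈ Set.Ico ψ (ψ + 2*Real.pi) := toIcoMod_mem_Ico h2π ψ θ
  have hk : ∃ k : ℤ, th = θ - 2*Real.pi*k := by
    refine ⟨toIcoDiv h2π ψ θ, ?_⟩
    rw [hth, toIcoMod, zsmul_eq_mul]; ring
  obtain ⟨k, hk⟩ := hk
  have hthA : th ∈ A := by
    have := hper θ hθ (-k)
    push_cast at this
    rw [hk]
    convert this using 1
    ring
  have hthA' : th ∈ A' := ⟨hthA, hmem2.1, hmem2.2.le⟩
  exact ⟨k, by rw [← hk]; exact ⟨csInf_le hA'bdd hthA', le_csSup hA'bdd2 hthA'⟩⟩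
lemma stepA (X : Set (Fin 3 → ℝ)) (p : Fin 3 → ℝ)
    (hX : X ⊆ unitSphere2) (hconv : SphConvex X) (hp1 : dot3 p p = 1)
    (hpX : p ∈ X) (hnpX : -p ∈ X) {x : Fin 3 → ℝ} (hx : x ∈ X)
    (hxp : x ≠ p) (hxnp : x ≠ -p) :
    ∃ u L, dot3 u u = 1 ∧ dot3 p u = 0 ∧ 0 < L ∧ L < Real.pi ∧
      x = Real.cos L • p + Real.sin L • u ∧
      ∀ α ∈ Set.Icc (0:ℝ) Real.pi, Real.cos α • p + Real.sin α • u ∈ X := by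
  obtain ⟨u, L, hu1, hpu, hL0, hLπ, hxe, harc⟩ := hconv p hpX x hx
  have hsc := Real.sin_sq_add_cos_sq L
  have hsin0 : Real.sin L ≠ 0 := by
    intro h
    have hxc : x = Real.cos L • p := by rw [hxe, h, zero_smul, add_zero]
    have h2 : (Real.cos L - 1) * (Real.cos L + 1) = 0 := by nlinarith
    rcases mul_eq_zero.1 h2 with h3 | h3
    · exact hxp (by rw [hxc, show Real.cos L = 1 by linarith, one_smul])
    · exact hxnp (by rw [hxc, show Real.cos L = -1 by linarith, neg_one_smul])
  have hsLpos : 0 < Real.sin L :=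
    lt_of_le_of_ne (Real.sin_nonneg_of_nonneg_of_le_pi hL0 hLπ) (Ne.symm hsin0)
  have hL0' : 0 < L := lt_of_le_of_ne hL0 (fun h => hsin0 (by rw [← h, Real.sin_zero]))
  have hLπ' : L < Real.pi := lt_of_le_of_ne hLπ (fun h => hsin0 (by rw [h, Real.sin_pi]))
  obtain ⟨w, M, hw1, hxw, hM0, hMπ, hnpe, harc2⟩ := hconv x hx (-p) hnpX
  have hx1 : dot3 x x = 1 := hX hx
  have hxwc : dot3 w x = 0 := by
    rw [show dot3 w x = dot3 x w by simp [dot3]; ring, hxw]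
  have hxpdot : dot3 x p = Real.cos L := by
    have := congrFun hxe
    have e0 := this 0; have e1 := this 1; have e2 := this 2
    simp only [Pi.add_apply, Pi.smul_apply, smul_eq_mul] at e0 e1 e2
    simp only [dot3] at hp1 hpu ⊢
    rw [e0, e1, e2]; linear_combination Real.cos L * hp1 + Real.sin L * hpu
  have hMcos : Real.cos M = - Real.cos L := by
    have := congrFun hnpe
    have e0 := this 0; have e1 := this 1; have e2 := this 2
    simp only [Pi.add_apply, Pi.smul_apply, Pi.neg_apply, smul_eq_mul] at e0 e1 e2
    simp only [dot3] at hx1 hxwc hxpdot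
    linear_combination (-(x 0)) * e0 - x 1 * e1 - x 2 * e2 - Real.cos M * hx1
      - Real.sin M * hxwc - hxpdot
  have hMeq : M = Real.pi - L := by
    have h1 : Real.cos M = Real.cos (Real.pi - L) := by rw [Real.cos_pi_sub, hMcos]
    exact Real.injOn_cos ⟨hM0, hMπ⟩ ⟨by linarith, by linarith⟩ h1
  have hMsin : Real.sin M = Real.sin L := by rw [hMeq, Real.sin_pi_sub]
  have hwe : w = (-Real.sin L) • p + Real.cos L • u := by
    apply smul_right_injective (Fin 3 → ℝ) hsin0
    funext i
    have e := congrFun hnpe i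
    have e2 := congrFun hxe i
    simp only [Pi.add_apply, Pi.smul_apply, Pi.neg_apply, smul_eq_mul] at e e2 ⊢
    rw [hMcos, hMsin] at e
    linear_combination (-1) * e + Real.cos L * e2 + p i * hsc
  refine ⟨u, L, hu1, hpu, hL0', hLπ', hxe, ?_⟩
  intro α hα
  rcases le_total α L with hc | hc
  · exact harc α ⟨hα.1, hc⟩
  · have hβ : α - L ∈ Set.Icc (0:ℝ) M := ⟨by linarith, by rw [hMeq]; linarith [hα.2]⟩
    have hmem := harc2 (α - L) hβ
    have hpt : Real.cos α • p + Real.sin α • u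
        = Real.cos (α - L) • x + Real.sin (α - L) • w := by
      funext i
      have e2 := congrFun hxe i
      have e3 := congrFun hwe i
      simp only [Pi.add_apply, Pi.smul_apply, Pi.neg_apply, smul_eq_mul] at e2 e3 ⊢
      rw [e2, e3, show α = L + (α - L) by ring, Real.cos_add, Real.sin_add]
      ring
    rw [hpt]; exact hmem

noncomputable def ecirc (u₀ v₀ : Fin 3 → ℝ) (θ : ℝ) : Fin 3 → ℝ := Real.cos θ • u₀ + Real.sin θ • v₀

lemma ecirc_apply (u₀ v₀ : Fin 3 → ℝ) (θ : ℝ) (i : Fin 3) :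
    ecirc u₀ v₀ θ i = Real.cos θ * u₀ i + Real.sin θ * v₀ i := by
  simp [ecirc]

lemma ecirc_dot (u₀ v₀ : Fin 3 → ℝ) (hu1 : dot3 u₀ u₀ = 1) (hv1 : dot3 v₀ v₀ = 1)
    (huv : dot3 u₀ v₀ = 0) (a b : ℝ) :
    dot3 (ecirc u₀ v₀ a) (ecirc u₀ v₀ b) = Real.cos (a - b) := by
  rw [ecirc, ecirc, dot3_comb, Real.cos_sub, huv,
    show dot3 v₀ u₀ = 0 by rw [dot3_comm]; exact huv, hu1, hv1]
  ring

lemma ecirc_dotp (p u₀ v₀ : Fin 3 → ℝ) (hpu : dot3 p u₀ = 0) (hpv : dot3 p v₀ = 0)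
    (θ : ℝ) : dot3 (ecirc u₀ v₀ θ) p = 0 := by
  rw [ecirc, dot3_comb_left, show dot3 u₀ p = 0 by rw [dot3_comm]; exact hpu,
    show dot3 v₀ p = 0 by rw [dot3_comm]; exact hpv]
  ring

lemma ecirc_per (u₀ v₀ : Fin 3 → ℝ) (θ : ℝ) (k : ℤ) :
    ecirc u₀ v₀ (θ + 2*Real.pi*k) = ecirc u₀ v₀ θ := by
  unfold ecirc
  rw [show θ + 2*Real.pi*k = θ + (k:ℝ)*(2*Real.pi) by ring,
    Real.cos_add_int_mul_two_pi, Real.sin_add_int_mul_two_pi]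

lemma dot3_sub_expand (y z : Fin 3 → ℝ) :
    dot3 (y - z) (y - z) = dot3 y y - 2*dot3 y z + dot3 z z := by
  simp [dot3]; ring

lemma dot3_diff (c a : ℝ) (p z1 z2 : Fin 3 → ℝ) :
    dot3 ((c • p + a • z1) - (c • p + a • z2)) ((c • p + a • z1) - (c • p + a • z2))
      = a^2 * (dot3 z1 z1 - 2*dot3 z1 z2 + dot3 z2 z2) := by
  simp [dot3]; ring

lemma dot3_neg_right (y p : Fin 3 → ℝ) : dot3 y (-p) = -dot3 y p := by
  simp [dot3]; ring

lemma dot3_neg_neg (p : Fin 3 → ℝ) : dot3 (-p) (-p) = dot3 p p := by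
  simp [dot3]
set_option maxHeartbeats 1000000 in
lemma core (X : Set (Fin 3 → ℝ)) (p u₀ v₀ : Fin 3 → ℝ)
    (hX : X ⊆ unitSphere2) (hclosed : IsClosed X) (hconv : SphConvex X)
    (hp1 : dot3 p p = 1) (hu1 : dot3 u₀ u₀ = 1) (hv1 : dot3 v₀ v₀ = 1)
    (hpu : dot3 p u₀ = 0) (hpv : dot3 p v₀ = 0) (huv : dot3 u₀ v₀ = 0)
    (hcompl : ∀ u : Fin 3 → ℝ, dot3 u u = 1 → dot3 u p = 0 → ∃ θ : ℝ, u = ecirc u₀ v₀ θ)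
    (hpX : p ∈ X) (hnpX : -p ∈ X)
    (harc0 : ∀ α ∈ Set.Icc (0:ℝ) Real.pi, Real.cos α • p + Real.sin α • u₀ ∈ X)
    (hpbd : ∀ r > (0:ℝ), ∃ y ∈ unitSphere2, dot3 (y - p) (y - p) < r ∧ y ∉ X)
    (hnpbd : ∀ r > (0:ℝ), ∃ y ∈ unitSphere2, dot3 (y - (-p)) (y - (-p)) < r ∧ y ∉ X)
    (hint : ∃ x ∈ X, ∃ r > (0:ℝ), ∀ y ∈ unitSphere2, dot3 (y - x) (y - x) < r → y ∈ X) :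
    ∃ θ₁ θ₂ : ℝ, 0 < θ₂ - θ₁ ∧ θ₂ - θ₁ ≤ Real.pi ∧
      X = {x ∈ unitSphere2 | 0 ≤ dot3 x (ecirc u₀ v₀ (θ₁ + Real.pi/2)) ∧
        0 ≤ dot3 x (ecirc u₀ v₀ (θ₂ - Real.pi/2))} ∧
      (∀ x ∈ halfGreatCircle p (ecirc u₀ v₀ θ₁), x ∈ X ∧
        ∀ r > (0:ℝ), ∃ y ∈ unitSphere2, dot3 (y - x) (y - x) < r ∧ y ∉ X) ∧
      (∀ x ∈ halfGreatCircle p (ecirc u₀ v₀ θ₂), x ∈ X ∧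
        ∀ r > (0:ℝ), ∃ y ∈ unitSphere2, dot3 (y - x) (y - x) < r ∧ y ∉ X) := by
  have hπ := Real.pi_pos
  set E := ecirc u₀ v₀ with hE
  have hE1 : ∀ a b : ℝ, dot3 (E a) (E b) = Real.cos (a - b) :=
    fun a b => ecirc_dot u₀ v₀ hu1 hv1 huv a b
  have hEp : ∀ θ, dot3 (E θ) p = 0 := fun θ => ecirc_dotp p u₀ v₀ hpu hpv θ
  have hpE : ∀ θ, dot3 p (E θ) = 0 := fun θ => by rw [dot3_comm]; exact hEp θ
  have hEper : ∀ (θ : ℝ) (k : ℤ), E (θ + 2*Real.pi*k) = E θ := fun θ k => ecirc_per u₀ v₀ θ k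
  have hEunit : ∀ θ, dot3 (E θ) (E θ) = 1 := fun θ => by rw [hE1, sub_self, Real.cos_zero]
  set A : Set ℝ := {θ | ∀ α ∈ Set.Icc (0:ℝ) Real.pi, Real.cos α • p + Real.sin α • E θ ∈ X}
    with hA
  have hAtrans : ∀ θ θ'' : ℝ, E θ = E θ'' → θ'' ∈ A → θ ∈ A := by
    intro θ θ'' h hθ'' α hα
    rw [h]; exact hθ'' α hα
  have hptE : ∀ θ, Real.cos (Real.pi/2) • p + Real.sin (Real.pi/2) • E θ = E θ := by
    intro θ
    rw [Real.cos_pi_div_two, Real.sin_pi_div_two, zero_smul, one_smul, zero_add]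
  have hEX : ∀ θ ∈ A, E θ ∈ X := by
    intro θ hθ
    have := hθ (Real.pi/2) ⟨by positivity, by linarith⟩
    rwa [hptE] at this
  have hA0 : (0:ℝ) ∈ A := by
    intro α hα
    have hE0 : E 0 = u₀ := by
      funext i; rw [hE, ecirc_apply]; simp
    rw [hE0]; exact harc0 α hα
  -- every non-polar point of X gives a direction in A
  have memA_of : ∀ y ∈ X, y ≠ p → y ≠ -p →
      ∃ θ α : ℝ, θ ∈ A ∧ 0 < α ∧ α < Real.pi ∧
        y = Real.cos α • p + Real.sin α • E θ := by
    intro y hy hyp hynp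
    obtain ⟨u, L, hu1', hpu', hL0, hLπ, hye, harc⟩ :=
      stepA X p hX hconv hp1 hpX hnpX hy hyp hynp
    obtain ⟨θ, hθ⟩ := hcompl u hu1' (by rw [dot3_comm]; exact hpu')
    refine ⟨θ, L, ?_, hL0, hLπ, by rw [← hθ]; exact hye⟩
    intro α hα
    rw [← hθ]; exact harc α hα
  -- uniqueness of representation
  have repA : ∀ (y : Fin 3 → ℝ) (θ α : ℝ), y = Real.cos α • p + Real.sin α • E θ →
      0 < α → α < Real.pi → y ∈ X → θ ∈ A := by
    intro y θ α hrep hα0 hαπ hyX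
    have hcos1 : Real.cos α < 1 := by
      have := Real.cos_lt_cos_of_nonneg_of_le_pi (le_refl 0) hαπ.le hα0
      rwa [Real.cos_zero] at this
    have hcosm1 : -1 < Real.cos α := by
      have := Real.cos_lt_cos_of_nonneg_of_le_pi hα0.le (le_refl Real.pi) hαπ
      rwa [Real.cos_pi] at this
    have hyd : dot3 y p = Real.cos α := by
      rw [hrep, dot3_comb_left, hp1, hEp]; ring
    have hyp : y ≠ p := by
      intro h; rw [h, hp1] at hyd; linarith
    have hynp : y ≠ -p := by
      intro h
      rw [h, show dot3 (-p) p = -1 by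
        simp only [dot3, Pi.neg_apply]; simp only [dot3] at hp1; linarith] at hyd
      linarith
    obtain ⟨θ'', α'', hθ''A, hα''0, hα''π, hrep2⟩ := memA_of y hyX hyp hynp
    have hyd2 : dot3 y p = Real.cos α'' := by
      rw [hrep2, dot3_comb_left, hp1, hEp]; ring
    have hαeq : α = α'' :=
      Real.injOn_cos ⟨hα0.le, hαπ.le⟩ ⟨hα''0.le, hα''π.le⟩ (by rw [← hyd, ← hyd2])
    have hsin : Real.sin α ≠ 0 :=
      (Real.sin_pos_of_pos_of_lt_pi hα0 hαπ).ne'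
    have hEeq : E θ = E θ'' := by
      apply smul_right_injective (Fin 3 → ℝ) hsin
      have h3 : Real.cos α • p + Real.sin α • E θ = Real.cos α • p + Real.sin α • E θ'' := by
        rw [← hrep, hrep2, hαeq]
      exact add_left_cancel h3
    exact hAtrans θ θ'' hEeq hθ''A
  -- representation of arbitrary sphere points
  have sphere_rep : ∀ y ∈ unitSphere2, ∃ α θ : ℝ, 0 ≤ α ∧ α ≤ Real.pi ∧
      y = Real.cos α • p + Real.sin α • E θ := by
    intro y hy
    have hy1 : dot3 y y = 1 := hy
    set c := dot3 y p with hc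
    have hcs : c^2 ≤ 1 := cauchy y p hy1 hp1
    have hc1 : -1 ≤ c := by nlinarith
    have hc2 : c ≤ 1 := by nlinarith
    rcases eq_or_lt_of_le hc2 with h | h
    · refine ⟨0, 0, le_refl 0, hπ.le, ?_⟩
      rw [Real.cos_zero, Real.sin_zero, one_smul, zero_smul, add_zero]
      exact eq_of_dot_one y p hy1 hp1 h
    rcases eq_or_lt_of_le hc1 with h' | h'
    · refine ⟨Real.pi, 0, hπ.le, le_refl _, ?_⟩
      rw [Real.cos_pi, Real.sin_pi, neg_one_smul, zero_smul, add_zero]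
      exact eq_of_dot_neg_one y p hy1 hp1 h'.symm
    · have hpos : 0 < 1 - c^2 := by nlinarith
      set s := Real.sqrt (1 - c^2) with hs
      have hs0 : 0 < s := Real.sqrt_pos.mpr hpos
      have hs2 : s^2 = 1 - c^2 := Real.sq_sqrt hpos.le
      set u := s⁻¹ • (y - c • p) with hu
      have hzz : dot3 (y - c • p) (y - c • p) = dot3 y y - 2*c*dot3 y p + c^2*dot3 p p := by
        simp [dot3]; ring
      rw [hy1, ← hc, hp1] at hzz
      have huu : dot3 u u = 1 := by
        have e : dot3 u u = s⁻¹ * s⁻¹ * dot3 (y - c • p) (y - c • p) := by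
          rw [hu]; simp [dot3]; ring
        rw [e, hzz]
        field_simp
        nlinarith
      have hup : dot3 u p = 0 := by
        have e : dot3 u p = s⁻¹ * (dot3 y p - c * dot3 p p) := by
          rw [hu]; simp [dot3]; ring
        rw [e, ← hc, hp1]; ring
      obtain ⟨θ, hθ⟩ := hcompl u huu hup
      refine ⟨Real.arccos c, θ, Real.arccos_nonneg c, Real.arccos_le_pi c, ?_⟩
      rw [Real.cos_arccos hc1 hc2, Real.sin_arccos, ← hs, ← hθ, hu]
      funext i
      simp only [Pi.add_apply, Pi.smul_apply, Pi.sub_apply, smul_eq_mul]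
      field_simp
      ring
  -- A is closed
  have hAcl : IsClosed A := by
    have hrw : A = ⋂ α ∈ Set.Icc (0:ℝ) Real.pi,
        ((fun θ => Real.cos α • p + Real.sin α • E θ) ⁻¹' X) := by
      ext θ
      simp only [hA, Set.mem_setOf_eq, Set.mem_iInter, Set.mem_preimage]
    rw [hrw]
    refine isClosed_biInter fun α _ => ?_
    refine IsClosed.preimage ?_ hclosed
    rw [hE]
    unfold ecirc
    fun_prop
  have hAper : ∀ θ ∈ A, ∀ k : ℤ, θ + 2*Real.pi*k ∈ A := by
    intro θ hθ k
    exact hAtrans _ θ (hEper θ k) hθ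
  -- arc convexity of A
  have hAconv : ∀ s ∈ A, ∀ t ∈ A, s ≤ t → t - s < Real.pi → Set.Icc s t ⊆ A := by
    intro s hs t ht hst hlt
    rcases eq_or_lt_of_le hst with rfl | hst'
    · intro θ hθ
      have : θ = s := le_antisymm hθ.2 hθ.1
      rwa [this]
    · have hEsX : E s ∈ X := hEX s hs
      have hEtX : E t ∈ X := hEX t ht
      obtain ⟨w, L, hw1, hEsw, hL0, hLπ, heq, harc2⟩ := hconv (E s) hEsX (E t) hEtX
      have hcosL : Real.cos L = Real.cos (t - s) := by
        have e : dot3 (E t) (E s) = Real.cos L := by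
          rw [heq, dot3_comb_left, hEunit,
            show dot3 w (E s) = 0 by rw [dot3_comm]; exact hEsw]
          ring
        rw [← hE1 t s, e]
      have hLeq : L = t - s :=
        Real.injOn_cos ⟨hL0, hLπ⟩ ⟨by linarith, by linarith⟩ hcosL
      have hsinL : Real.sin L ≠ 0 := by
        rw [hLeq]; exact (Real.sin_pos_of_pos_of_lt_pi (by linarith) hlt).ne'
      have hwe : w = E (s + Real.pi/2) := by
        apply smul_right_injective (Fin 3 → ℝ) hsinL
        funext i
        have e := congrFun heq i
        simp only [hE, ecirc_apply, Pi.add_apply, Pi.smul_apply, smul_eq_mul] at e ⊢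
        rw [hLeq] at e ⊢
        rw [Real.cos_add_pi_div_two, Real.sin_add_pi_div_two, Real.sin_sub]
        rw [Real.cos_sub, Real.sin_sub] at e
        linear_combination (-1) * e - (Real.cos t * u₀ i + Real.sin t * v₀ i)
          * (Real.sin_sq_add_cos_sq s)
      have hmapped : ∀ θ ∈ Set.Icc s t, E θ ∈ X := by
        intro θ hθ
        have hβ : θ - s ∈ Set.Icc (0:ℝ) L := ⟨by linarith [hθ.1], by rw [hLeq]; linarith [hθ.2]⟩
        have hmem := harc2 (θ - s) hβ
        have hpt : Real.cos (θ-s) • E s + Real.sin (θ-s) • w = E θ := by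
          rw [hwe]
          funext i
          simp only [hE, ecirc_apply, Pi.add_apply, Pi.smul_apply, smul_eq_mul]
          rw [Real.cos_add_pi_div_two, Real.sin_add_pi_div_two, Real.cos_sub, Real.sin_sub]
          linear_combination (Real.cos θ * u₀ i + Real.sin θ * v₀ i)
            * (Real.sin_sq_add_cos_sq s)
        rw [← hpt]; exact hmem
      intro θ hθ
      exact repA (E θ) θ (Real.pi/2) (hptE θ).symm (by positivity) (by linarith)
        (hmapped θ hθ)
  -- A is a proper subset of ℝ
  have hψex : ∃ ψ : ℝ, ψ ∉ A := by
    by_contra hcon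
    push_neg at hcon
    obtain ⟨y, hyS, _, hyX⟩ := hpbd 1 one_pos
    obtain ⟨α, θ, hα0, hαπ, hrep⟩ := sphere_rep y hyS
    exact hyX (by rw [hrep]; exact hcon θ α ⟨hα0, hαπ⟩)
  obtain ⟨ψ, hψ⟩ := hψex
  obtain ⟨x₀, hx₀X, r, hr, hball⟩ := hint
  obtain ⟨δ, hδ0, hδπ, hδr⟩ := small_angle r hr
  have hsphpt : ∀ (β θ : ℝ), (Real.cos β • p + Real.sin β • E θ) ∈ unitSphere2 := by
    intro β θ
    show dot3 _ _ = 1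
    rw [dot3_comb, hp1, hpE, hEp, hEunit]
    linear_combination Real.sin_sq_add_cos_sq β
  have hnear : ∀ (β θ : ℝ), 0 < β → β < Real.pi →
      dot3 ((Real.cos β • p + Real.sin β • E θ) - x₀)
        ((Real.cos β • p + Real.sin β • E θ) - x₀) < r → θ ∈ A := by
    intro β θ hβ0 hβπ hd
    exact repA _ θ β rfl hβ0 hβπ (hball _ (hsphpt β θ) hd)
  have hδ2 : 0 < 2 - 2*Real.cos δ + (2 - 2*Real.cos δ) → True := fun _ => trivial
  have hx₀p : x₀ ≠ p := by
    intro h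
    apply hψ
    apply hnear δ ψ hδ0 hδπ
    rw [h, dot3_sub_expand,
      show dot3 (Real.cos δ • p + Real.sin δ • E ψ) (Real.cos δ • p + Real.sin δ • E ψ) = 1
        from hsphpt δ ψ,
      show dot3 (Real.cos δ • p + Real.sin δ • E ψ) p = Real.cos δ by
        rw [dot3_comb_left, hp1, hEp]; ring, hp1]
    linarith
  have hx₀np : x₀ ≠ -p := by
    intro h
    apply hψ
    apply hnear (Real.pi - δ) ψ (by linarith) (by linarith)
    rw [h, dot3_sub_expand,
      show dot3 (Real.cos (Real.pi - δ) • p + Real.sin (Real.pi - δ) • E ψ)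
          (Real.cos (Real.pi - δ) • p + Real.sin (Real.pi - δ) • E ψ) = 1
        from hsphpt _ ψ, dot3_neg_right, dot3_neg_neg,
      show dot3 (Real.cos (Real.pi - δ) • p + Real.sin (Real.pi - δ) • E ψ) p
          = Real.cos (Real.pi - δ) by rw [dot3_comb_left, hp1, hEp]; ring,
      Real.cos_pi_sub, hp1]
    linarith
  obtain ⟨θs, αs, hθsA, hαs0, hαsπ, hx₀rep⟩ := memA_of x₀ hx₀X hx₀p hx₀np
  have hintA : Set.Icc (θs - δ) (θs + δ) ⊆ A := by
    intro t ht
    apply hnear αs t hαs0 hαsπ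
    rw [hx₀rep, dot3_diff, hEunit, hEunit, hE1]
    have h1 : Real.cos δ ≤ Real.cos (t - θs) := by
      rw [← Real.cos_abs (t - θs)]
      refine Real.cos_le_cos_of_nonneg_of_le_pi (abs_nonneg _) hδπ.le ?_
      rw [abs_le]
      constructor
      · linarith [ht.1]
      · linarith [ht.2]
    have h2 : Real.sin αs ≤ 1 := Real.sin_le_one αs
    have h3 : 0 ≤ Real.sin αs := Real.sin_nonneg_of_nonneg_of_le_pi hαs0.le hαsπ.le
    have h4 : Real.cos (t - θs) ≤ 1 := Real.cos_le_one _
    have h5 : Real.sin αs^2 ≤ 1 := by nlinarith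
    have h6 : 0 ≤ 1 - 2*Real.cos (t - θs) + 1 := by linarith
    have h7 : Real.sin αs^2 * (1 - 2*Real.cos (t - θs) + 1)
        ≤ 1 - 2*Real.cos (t - θs) + 1 := by nlinarith
    linarith
  obtain ⟨θ₁, θ₂, hθ₁A, hθ₂A, hgt, hle, hIcc, hchar⟩ :=
    structure_arc A hAcl hAper hAconv ψ hψ θs δ hδ0 hintA
  have h2π : (0:ℝ) < 2*Real.pi := by linarith
  refine ⟨θ₁, θ₂, hgt, hle, ?_, ?_, ?_⟩
  · -- the set equality
    ext x
    simp only [Set.mem_setOf_eq]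
    constructor
    · intro hx
      have hxS : x ∈ unitSphere2 := hX hx
      refine ⟨hxS, ?_⟩
      by_cases hc1 : x = p
      · constructor <;> (rw [hc1, hpE])
      have hnegE : ∀ b : ℝ, dot3 (-p) (E b) = 0 := by
        intro b
        rw [show dot3 (-p) (E b) = -(dot3 (E b) p) by simp [dot3]; ring, hEp, neg_zero]
      by_cases hc2 : x = -p
      · constructor <;> rw [hc2, hnegE]
      obtain ⟨θ, α, hθA, hα0, hαπ, hrep⟩ := memA_of x hx hc1 hc2
      obtain ⟨k, hk⟩ := hchar θ hθA
      have hsα : 0 ≤ Real.sin α := Real.sin_nonneg_of_nonneg_of_le_pi hα0.le hαπ.le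
      have hd1 : dot3 x (E (θ₁ + Real.pi/2)) = Real.sin α * Real.sin (θ - θ₁) := by
        rw [hrep, dot3_comb_left, hpE, hE1,
          show θ - (θ₁ + Real.pi/2) = (θ - θ₁) - Real.pi/2 by ring,
          Real.cos_sub_pi_div_two]
        ring
      have hd2 : dot3 x (E (θ₂ - Real.pi/2)) = Real.sin α * Real.sin (θ₂ - θ) := by
        rw [hrep, dot3_comb_left, hpE, hE1,
          show θ - (θ₂ - Real.pi/2) = (θ - θ₂) + Real.pi/2 by ring,
          Real.cos_add_pi_div_two, show θ₂ - θ = -(θ - θ₂) by ring, Real.sin_neg]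
        ring
      have hs1 : 0 ≤ Real.sin (θ - θ₁) := by
        rw [show θ - θ₁ = (θ - 2*Real.pi*k - θ₁) + (k:ℤ)*(2*Real.pi) by push_cast; ring,
          Real.sin_add_int_mul_two_pi]
        exact Real.sin_nonneg_of_nonneg_of_le_pi (by linarith [hk.1]) (by linarith [hk.2])
      have hs2 : 0 ≤ Real.sin (θ₂ - θ) := by
        rw [show θ₂ - θ = (θ₂ - (θ - 2*Real.pi*k)) + (-k:ℤ)*(2*Real.pi) by push_cast; ring,
          Real.sin_add_int_mul_two_pi]
        exact Real.sin_nonneg_of_nonneg_of_le_pi (by linarith [hk.2]) (by linarith [hk.1])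
      rw [hd1, hd2]
      exact ⟨mul_nonneg hsα hs1, mul_nonneg hsα hs2⟩
    · rintro ⟨hxS, h1, h2⟩
      obtain ⟨α, θ, hα0, hαπ, hrep⟩ := sphere_rep x hxS
      have hsin := Real.sin_nonneg_of_nonneg_of_le_pi hα0 hαπ
      rcases eq_or_lt_of_le hsin with hz | hz
      · have hx' : x = Real.cos α • p := by rw [hrep, ← hz, zero_smul, add_zero]
        have hxx : dot3 x x = 1 := hxS
        have hcα : Real.cos α ^ 2 = 1 := by
          rw [hx'] at hxx
          have e : dot3 (Real.cos α • p) (Real.cos α • p) = Real.cos α^2 * dot3 p p := by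
            simp [dot3]; ring
          rw [e, hp1] at hxx; linarith
        have h2' : (Real.cos α - 1)*(Real.cos α + 1) = 0 := by nlinarith
        rcases mul_eq_zero.1 h2' with h3 | h3
        · rw [hx', show Real.cos α = 1 by linarith, one_smul]; exact hpX
        · rw [hx', show Real.cos α = -1 by linarith, neg_one_smul]; exact hnpX
      · set th := toIcoMod h2π θ₁ θ with hth
        have hmem2 := toIcoMod_mem_Ico h2π θ₁ θ
        obtain ⟨k, hk⟩ : ∃ k : ℤ, θ = th + 2*Real.pi*k :=
          ⟨toIcoDiv h2π θ₁ θ, by rw [hth, toIcoMod, zsmul_eq_mul]; ring⟩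
        have hEeq : E θ = E th := by rw [hk]; exact hEper th k
        have hd1 : dot3 x (E (θ₁ + Real.pi/2)) = Real.sin α * Real.sin (th - θ₁) := by
          rw [hrep, dot3_comb_left, hpE, hEeq, hE1,
            show th - (θ₁ + Real.pi/2) = (th - θ₁) - Real.pi/2 by ring,
            Real.cos_sub_pi_div_two]
          ring
        have hd2 : dot3 x (E (θ₂ - Real.pi/2)) = Real.sin α * Real.sin (θ₂ - th) := by
          rw [hrep, dot3_comb_left, hpE, hEeq, hE1,
            show th - (θ₂ - Real.pi/2) = (th - θ₂) + Real.pi/2 by ring,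
            Real.cos_add_pi_div_two, show θ₂ - th = -(th - θ₂) by ring, Real.sin_neg]
          ring
        rw [hd1] at h1
        rw [hd2] at h2
        have hs1 : 0 ≤ Real.sin (th - θ₁) := by nlinarith
        have hs2 : 0 ≤ Real.sin (θ₂ - th) := by nlinarith
        have hle1 : th - θ₁ ≤ Real.pi := by
          by_contra hcon
          push_neg at hcon
          have hb : th - θ₁ < 2*Real.pi := by linarith [hmem2.2]
          have hpos := Real.sin_pos_of_pos_of_lt_pi
            (show 0 < th - θ₁ - Real.pi by linarith) (by linarith)
          rw [Real.sin_sub_pi] at hpos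
          linarith
        have hle2 : th ≤ θ₂ := by
          by_contra hcon
          push_neg at hcon
          have hpos := Real.sin_pos_of_pos_of_lt_pi
            (show 0 < th - θ₂ by linarith) (by linarith [hmem2.1])
          rw [show th - θ₂ = -(θ₂ - th) by ring, Real.sin_neg] at hpos
          linarith
        have hthA : th ∈ A := hIcc ⟨hmem2.1, hle2⟩
        rw [hrep, hEeq]
        exact hthA α ⟨hα0, hαπ⟩
  · -- boundary: half circle at θ₁
    rintro x ⟨α, hα, hxe⟩
    constructor
    · rw [hxe]; exact hθ₁A α hα
    intro r' hr'
    obtain ⟨δ', hδ'0, hδ'π, hδ'r⟩ := small_angle r' hr'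
    have hsin := Real.sin_nonneg_of_nonneg_of_le_pi hα.1 hα.2
    rcases eq_or_lt_of_le hsin with hz | hz
    · have hx' : x = Real.cos α • p := by rw [hxe, ← hz, zero_smul, add_zero]
      have hcα : Real.cos α ^ 2 = 1 := by
        have := Real.sin_sq_add_cos_sq α
        nlinarith
      have h2' : (Real.cos α - 1)*(Real.cos α + 1) = 0 := by nlinarith
      rcases mul_eq_zero.1 h2' with h3 | h3
      · rw [hx', show Real.cos α = 1 by linarith, one_smul]; exact hpbd r' hr'
      · rw [hx', show Real.cos α = -1 by linarith, neg_one_smul]; exact hnpbd r' hr'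
    · have hα0 : 0 < α := by
        rcases lt_or_eq_of_le hα.1 with h | h
        · exact h
        · exfalso; rw [← h, Real.sin_zero] at hz; linarith
      have hαπ : α < Real.pi := by
        rcases lt_or_eq_of_le hα.2 with h | h
        · exact h
        · exfalso; rw [h, Real.sin_pi] at hz; linarith
      refine ⟨Real.cos α • p + Real.sin α • E (θ₁ - δ'), hsphpt α (θ₁ - δ'), ?_, ?_⟩
      · rw [hxe, dot3_diff, hEunit, hEunit, hE1,
          show θ₁ - δ' - θ₁ = -δ' by ring, Real.cos_neg]
        have h5 : Real.sin α^2 ≤ 1 := by nlinarith [Real.sin_le_one α]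
        have h6 : 0 ≤ 1 - 2*Real.cos δ' + 1 := by linarith [Real.cos_le_one δ']
        nlinarith
      · intro hyX
        have hθA : θ₁ - δ' ∈ A := repA _ (θ₁ - δ') α rfl hα0 hαπ hyX
        obtain ⟨k, hk⟩ := hchar _ hθA
        rcases le_or_gt 0 k with hks | hks
        · have : (0:ℝ) ≤ (k:ℝ) := by exact_mod_cast hks
          have := hk.1
          nlinarith
        · have hk1 : k ≤ -1 := by omega
          have : (k:ℝ) ≤ -1 := by exact_mod_cast hk1
          have := hk.2
          nlinarith
  · -- boundary: half circle at θ₂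
    rintro x ⟨α, hα, hxe⟩
    constructor
    · rw [hxe]; exact hθ₂A α hα
    intro r' hr'
    obtain ⟨δ', hδ'0, hδ'π, hδ'r⟩ := small_angle r' hr'
    have hsin := Real.sin_nonneg_of_nonneg_of_le_pi hα.1 hα.2
    rcases eq_or_lt_of_le hsin with hz | hz
    · have hx' : x = Real.cos α • p := by rw [hxe, ← hz, zero_smul, add_zero]
      have hcα : Real.cos α ^ 2 = 1 := by
        have := Real.sin_sq_add_cos_sq α
        nlinarith
      have h2' : (Real.cos α - 1)*(Real.cos α + 1) = 0 := by nlinarith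
      rcases mul_eq_zero.1 h2' with h3 | h3
      · rw [hx', show Real.cos α = 1 by linarith, one_smul]; exact hpbd r' hr'
      · rw [hx', show Real.cos α = -1 by linarith, neg_one_smul]; exact hnpbd r' hr'
    · have hα0 : 0 < α := by
        rcases lt_or_eq_of_le hα.1 with h | h
        · exact h
        · exfalso; rw [← h, Real.sin_zero] at hz; linarith
      have hαπ : α < Real.pi := by
        rcases lt_or_eq_of_le hα.2 with h | h
        · exact h
        · exfalso; rw [h, Real.sin_pi] at hz; linarith
      refine ⟨Real.cos α • p + Real.sin α • E (θ₂ + δ'), hsphpt α (θ₂ + δ'), ?_, ?_⟩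
      · rw [hxe, dot3_diff, hEunit, hEunit, hE1,
          show θ₂ + δ' - θ₂ = δ' by ring]
        have h5 : Real.sin α^2 ≤ 1 := by nlinarith [Real.sin_le_one α]
        have h6 : 0 ≤ 1 - 2*Real.cos δ' + 1 := by linarith [Real.cos_le_one δ']
        nlinarith
      · intro hyX
        have hθA : θ₂ + δ' ∈ A := repA _ (θ₂ + δ') α rfl hα0 hαπ hyX
        obtain ⟨k, hk⟩ := hchar _ hθA
        rcases le_or_gt k 0 with hks | hks
        · have : (k:ℝ) ≤ 0 := by exact_mod_cast hks
          have := hk.2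
          nlinarith
        · have : (1:ℝ) ≤ (k:ℝ) := by exact_mod_cast hks
          have := hk.1
          nlinarith

end Stmt10Aux

set_option maxHeartbeats 1000000 in
open Stmt10Aux in
/-- Let `Γ ⊆ S²` be a simple closed curve which bounds a closed spherically
convex region `X` with nonempty interior (relative to the sphere), and suppose `Γ` contains a
pair of antipodal points `±p`.  Then `Γ` bounds a lune: `X` is the intersection of the sphere
with two closed half-spaces whose boundary planes contain the axis through `±p`; in particular
`Γ` contains two distinct half-great-circle (geodesic) subarcs with endpoints `±p`. -/
theorem stmt_10 (X Γ : Set (Fin 3 → ℝ)) (p : Fin 3 → ℝ)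
    (hX : X ⊆ unitSphere2) (hclosed : IsClosed X) (hconv : SphConvex X)
    (hint : ∃ x ∈ X, ∃ r > (0 : ℝ), ∀ y ∈ unitSphere2, dot3 (y - x) (y - x) < r → y ∈ X)
    (hΓ : Γ = {x ∈ X | ∀ r > (0 : ℝ), ∃ y ∈ unitSphere2, dot3 (y - x) (y - x) < r ∧ y ∉ X})
    (hcurve : ∃ c : ℝ → Fin 3 → ℝ, Continuous c ∧ Function.Periodic c (2 * Real.pi) ∧
      Set.InjOn c (Set.Ico 0 (2 * Real.pi)) ∧ Set.range c = Γ)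
    (hp : p ∈ Γ) (hp' : -p ∈ Γ) :
    (∃ u v : Fin 3 → ℝ, dot3 u u = 1 ∧ dot3 v v = 1 ∧ dot3 u p = 0 ∧ dot3 v p = 0 ∧
      X = {x ∈ unitSphere2 | 0 ≤ dot3 x u ∧ 0 ≤ dot3 x v}) ∧
    (∃ w₁ w₂ : Fin 3 → ℝ, w₁ ≠ w₂ ∧ dot3 w₁ w₁ = 1 ∧ dot3 w₂ w₂ = 1 ∧
      dot3 w₁ p = 0 ∧ dot3 w₂ p = 0 ∧
      halfGreatCircle p w₁ ⊆ Γ ∧ halfGreatCircle p w₂ ⊆ Γ) := by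
  rw [hΓ] at hp hp'
  obtain ⟨hpX, hpbd⟩ := hp
  obtain ⟨hnpX, hnpbd⟩ := hp'
  have hp1 : dot3 p p = 1 := hX hpX
  obtain ⟨u₀, L, hu1, hpu, hL0, hLπ, heq, harc⟩ := hconv p hpX (-p) hnpX
  have hnpp : dot3 (-p) p = -1 := by
    rw [show dot3 (-p) p = -(dot3 p p) by simp [dot3]; ring, hp1]
  have hcosL : Real.cos L = -1 := by
    have e2 : dot3 (-p) p = Real.cos L * dot3 p p + Real.sin L * dot3 u₀ p := by
      rw [heq, dot3_comb_left]
    rw [hnpp, hp1, show dot3 u₀ p = 0 by rw [dot3_comm]; exact hpu] at e2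
    linarith
  have hLeq : L = Real.pi := by
    refine Real.injOn_cos ⟨hL0, hLπ⟩ ⟨Real.pi_pos.le, le_refl _⟩ ?_
    rw [hcosL, Real.cos_pi]
  rw [hLeq] at harc
  set v₀ := cross3 p u₀ with hv₀
  have hv1 : dot3 v₀ v₀ = 1 := by rw [hv₀, cross3_lagrange, hp1, hu1, hpu]; ring
  have hpv : dot3 p v₀ = 0 := by rw [dot3_comm, hv₀]; exact cross3_orth_left p u₀
  have huv : dot3 u₀ v₀ = 0 := by rw [dot3_comm, hv₀]; exact cross3_orth_right p u₀
  have hcompl : ∀ u : Fin 3 → ℝ, dot3 u u = 1 → dot3 u p = 0 → ∃ θ, u = ecirc u₀ v₀ θ := by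
    intro u huu hup
    have hq : u - dot3 u u₀ • u₀ = dot3 (u - dot3 u u₀ • u₀) (cross3 p u₀) • cross3 p u₀ := by
      refine span_two p u₀ _ hp1 hu1 hpu ?_ ?_
      · rw [show dot3 (u - dot3 u u₀ • u₀) p = dot3 u p - dot3 u u₀ * dot3 u₀ p by
          simp [dot3]; ring, hup, show dot3 u₀ p = 0 by rw [dot3_comm]; exact hpu]
        ring
      · rw [show dot3 (u - dot3 u u₀ • u₀) u₀ = dot3 u u₀ - dot3 u u₀ * dot3 u₀ u₀ by
          simp [dot3]; ring, hu1]
        ring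
    rw [← hv₀] at hq
    have hqv : dot3 (u - dot3 u u₀ • u₀) v₀ = dot3 u v₀ := by
      rw [show dot3 (u - dot3 u u₀ • u₀) v₀ = dot3 u v₀ - dot3 u u₀ * dot3 u₀ v₀ by
        simp [dot3]; ring, huv]
      ring
    rw [hqv] at hq
    have hdecomp : u = dot3 u u₀ • u₀ + dot3 u v₀ • v₀ := by
      linear_combination (norm := abel) hq
    have hsq : (dot3 u u₀)^2 + (dot3 u v₀)^2 = 1 := by
      have e := dot3_comb (dot3 u u₀) (dot3 u v₀) (dot3 u u₀) (dot3 u v₀) u₀ v₀ u₀ v₀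
      rw [← hdecomp, huu, hu1, hv1, huv,
        show dot3 v₀ u₀ = 0 by rw [dot3_comm]; exact huv] at e
      linear_combination -e
    obtain ⟨θ, hcos, hsin⟩ := circle_surj _ _ hsq
    refine ⟨θ, ?_⟩
    show u = Real.cos θ • u₀ + Real.sin θ • v₀
    rw [hcos, hsin]
    exact hdecomp
  obtain ⟨θ₁, θ₂, hgt, hle, hXeq, hb1, hb2⟩ :=
    core X p u₀ v₀ hX hclosed hconv hp1 hu1 hv1 hpu hpv huv hcompl hpX hnpX harc
      hpbd hnpbd hint
  have hunit : ∀ θ : ℝ, dot3 (ecirc u₀ v₀ θ) (ecirc u₀ v₀ θ) = 1 := by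
    intro θ
    rw [ecirc_dot u₀ v₀ hu1 hv1 huv, sub_self, Real.cos_zero]
  constructor
  · exact ⟨ecirc u₀ v₀ (θ₁ + Real.pi/2), ecirc u₀ v₀ (θ₂ - Real.pi/2),
      hunit _, hunit _, ecirc_dotp p u₀ v₀ hpu hpv _, ecirc_dotp p u₀ v₀ hpu hpv _, hXeq⟩
  · refine ⟨ecirc u₀ v₀ θ₁, ecirc u₀ v₀ θ₂, ?_, hunit _, hunit _,
      ecirc_dotp p u₀ v₀ hpu hpv _, ecirc_dotp p u₀ v₀ hpu hpv _, ?_, ?_⟩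
    · intro h
      have e := ecirc_dot u₀ v₀ hu1 hv1 huv θ₁ θ₂
      rw [h, hunit θ₂] at e
      have e3 : Real.cos (θ₂ - θ₁) < 1 := by
        have := Real.cos_lt_cos_of_nonneg_of_le_pi (le_refl (0:ℝ)) hle hgt
        rwa [Real.cos_zero] at this
      rw [show θ₁ - θ₂ = -(θ₂ - θ₁) by ring, Real.cos_neg] at e
      linarith
    · intro x hx
      rw [hΓ]
      exact hb1 x hx
    · intro x hx
      rw [hΓ]
      exact hb2 x hx
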